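/- arXiv:1607.03423 — 5 statements merged into one kernel-verified Lean document; each statement's English description precedes it below -/
import Mathlib

section
/- Let R be a commutative noetherian ring and S an R-algebra (not necessarily commutative; the image of R is central in S) that is finitely generated as an R-module. Let 0 → A →ι B →π C → 0 be a short exact sequence of finitely generated left S-modules (ι injective, π surjective, ker π = im ι), and let J be an ideal of R such that J^k • A = 0 for some k ≥ 0. Then there exists n such that the induced sequence 0 → A → B/(Jⁿ • B) → C/(Jⁿ • C) → 0, where the first map is ι followed by the quotient projection and the second map is induced by π, is exact; moreover Jⁿ annihilates both B/(Jⁿ • B) and C/(Jⁿ • C), so their supports over R are contained in the zero locus of J. -/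
/-- Universe-polymorphic Artin–Rees lemma, deduced from `Ideal.exists_pow_inf_eq_pow_smul`
by replacing `M` with a quotient of `Fin m → R`, which lives in the universe of `R`. -/
theorem artinRees_aux {R : Type*} {M : Type*} [CommRing R] [IsNoetherianRing R]
    [AddCommGroup M] [Module R M] [Module.Finite R M] (I : Ideal R) (N : Submodule R M) :
    ∃ k : ℕ, ∀ n ≥ k,
      I ^ n • (⊤ : Submodule R M) ⊓ N = I ^ (n - k) • (I ^ k • (⊤ : Submodule R M) ⊓ N) := by
  obtain ⟨m, f, hf⟩ := Module.Finite.exists_fin' R M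
  let e : ((Fin m → R) ⧸ LinearMap.ker f) ≃ₗ[R] M := f.quotKerEquivOfSurjective hf
  let e' : ((Fin m → R) ⧸ LinearMap.ker f) →ₗ[R] M := e
  obtain ⟨k, hk⟩ := Ideal.exists_pow_inf_eq_pow_smul
    (M := (Fin m → R) ⧸ LinearMap.ker f) I (N.comap e')
  refine ⟨k, fun n hn => ?_⟩
  have h := congrArg (Submodule.map e') (hk n hn)
  have hinj : Function.Injective e' := e.injective
  have hrange : LinearMap.range e' = ⊤ := LinearEquiv.range e
  have htop : Submodule.map e' ⊤ = ⊤ := by rw [Submodule.map_top, hrange]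
  have hN : Submodule.map e' (N.comap e') = N := by
    rw [Submodule.map_comap_eq, hrange, top_inf_eq]
  simp only [Submodule.map_smul'', Submodule.map_inf e' hinj, htop, hN] at h
  exact h

/-- Affine version of Proposition 4.6: a short exact sequence of finitely generated
`S`-modules whose first term is annihilated by a power of `J ⊆ R` maps onto a short
exact sequence `0 → A → B/(JⁿB) → C/(JⁿC) → 0`, whose last two terms are annihilated
by `Jⁿ`. -/
theorem exists_pow_smul_quotient_short_exact
    {R S A B C : Type*} [CommRing R] [IsNoetherianRing R] [Ring S] [Algebra R S]
    [Module.Finite R S]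
    [AddCommGroup A] [Module S A] [Module R A] [IsScalarTower R S A] [Module.Finite S A]
    [AddCommGroup B] [Module S B] [Module R B] [IsScalarTower R S B] [Module.Finite S B]
    [AddCommGroup C] [Module S C] [Module R C] [IsScalarTower R S C] [Module.Finite S C]
    (ι : A →ₗ[S] B) (π : B →ₗ[S] C)
    (hι : Function.Injective ι) (hπ : Function.Surjective π)
    (hex : LinearMap.ker π = LinearMap.range ι)
    (J : Ideal R) (hJ : ∃ k : ℕ, J ^ k • (⊤ : Submodule R A) = ⊥) :
    ∃ n : ℕ, ∃ hle : J ^ n • (⊤ : Submodule R B) ≤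
        (J ^ n • (⊤ : Submodule R C)).comap (π.restrictScalars R),
      Function.Injective
          ((J ^ n • (⊤ : Submodule R B)).mkQ.comp (ι.restrictScalars R)) ∧
        LinearMap.range ((J ^ n • (⊤ : Submodule R B)).mkQ.comp (ι.restrictScalars R)) =
          LinearMap.ker (Submodule.mapQ (J ^ n • (⊤ : Submodule R B))
            (J ^ n • (⊤ : Submodule R C)) (π.restrictScalars R) hle) ∧
        Function.Surjective (Submodule.mapQ (J ^ n • (⊤ : Submodule R B))
          (J ^ n • (⊤ : Submodule R C)) (π.restrictScalars R) hle) ∧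
        (∀ j ∈ J ^ n, ∀ x : B ⧸ J ^ n • (⊤ : Submodule R B), j • x = 0) ∧
        (∀ j ∈ J ^ n, ∀ x : C ⧸ J ^ n • (⊤ : Submodule R C), j • x = 0) := by
  obtain ⟨k, hk⟩ := hJ
  have : Module.Finite R B := Module.Finite.trans S B
  -- Artin-Rees
  obtain ⟨k₀, hAR⟩ := artinRees_aux J
    (LinearMap.range (ι.restrictScalars R))
  refine ⟨k₀ + k, ?_, ?_, ?_, ?_, ?_, ?_⟩
  · -- hle
    rw [← Submodule.map_le_iff_le_comap, Submodule.map_smul'']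
    exact Submodule.smul_mono le_rfl le_top
  · -- injectivity
    intro x y hxy
    apply hι
    have hmem : (ι.restrictScalars R) (x - y) ∈ J ^ (k₀ + k) • (⊤ : Submodule R B) := by
      rw [← Submodule.Quotient.mk_eq_zero, ← Submodule.mkQ_apply, map_sub]
      simpa [sub_eq_zero] using hxy
    have h1 : (ι.restrictScalars R) (x - y) ∈
        J ^ (k₀ + k) • (⊤ : Submodule R B) ⊓ LinearMap.range (ι.restrictScalars R) :=
      ⟨hmem, ⟨x - y, rfl⟩⟩
    rw [hAR (k₀ + k) (Nat.le_add_right _ _), Nat.add_sub_cancel_left] at h1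
    have h2 : (ι.restrictScalars R) (x - y) ∈
        J ^ k • LinearMap.range (ι.restrictScalars R) :=
      Submodule.smul_mono le_rfl inf_le_right h1
    rw [LinearMap.range_eq_map, ← Submodule.map_smul'', hk, Submodule.map_bot,
      Submodule.mem_bot] at h2
    have : ι x - ι y = 0 := by simpa [map_sub] using h2
    simpa [sub_eq_zero] using this
  · -- exactness
    ext z
    constructor
    · rintro ⟨a, rfl⟩
      simp only [LinearMap.mem_ker, LinearMap.coe_comp, Function.comp_apply,
        Submodule.mkQ_apply, Submodule.mapQ_apply]
      have : π (ι a) = 0 := by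
        have : ι a ∈ LinearMap.ker π := hex ▸ ⟨a, rfl⟩
        exact this
      simp [this]
    · intro hz
      obtain ⟨b, rfl⟩ := Submodule.mkQ_surjective _ z
      rw [Submodule.mkQ_apply, LinearMap.mem_ker, Submodule.mapQ_apply, Submodule.Quotient.mk_eq_zero] at hz
      -- π b ∈ Jⁿ • ⊤_C = π (Jⁿ • ⊤_B)
      have : (J ^ (k₀ + k) • (⊤ : Submodule R C)) =
          Submodule.map (π.restrictScalars R) (J ^ (k₀ + k) • (⊤ : Submodule R B)) := by
        rw [Submodule.map_smul'', Submodule.map_top,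
          LinearMap.range_eq_top.mpr (show Function.Surjective (π.restrictScalars R) from hπ)]
      rw [this] at hz
      obtain ⟨b', hb', hbb⟩ := hz
      have hker : b - b' ∈ LinearMap.ker π := by
        rw [LinearMap.mem_ker, map_sub, sub_eq_zero]
        exact hbb.symm
      rw [hex] at hker
      obtain ⟨a, ha⟩ := hker
      refine ⟨a, ?_⟩
      simp only [LinearMap.coe_comp, Function.comp_apply, Submodule.mkQ_apply,
        LinearMap.coe_restrictScalars, ha]
      rw [Submodule.Quotient.eq]
      simpa using hb'
  · -- surjectivity
    intro z
    obtain ⟨c, rfl⟩ := Submodule.mkQ_surjective _ z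
    obtain ⟨b, rfl⟩ := hπ c
    exact ⟨Submodule.Quotient.mk b, by simp [Submodule.mapQ_apply]⟩
  · intro j hj x
    obtain ⟨b, rfl⟩ := Submodule.mkQ_surjective _ x
    rw [Submodule.mkQ_apply, ← Submodule.Quotient.mk_smul, Submodule.Quotient.mk_eq_zero]
    exact Submodule.smul_mem_smul hj trivial
  · intro j hj x
    obtain ⟨c, rfl⟩ := Submodule.mkQ_surjective _ x
    rw [Submodule.mkQ_apply, ← Submodule.Quotient.mk_smul, Submodule.Quotient.mk_eq_zero]
    exact Submodule.smul_mem_smul hj trivial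
end

section
/- Let (R, m) be a commutative noetherian local ring and A an R-algebra (not necessarily commutative; the image of R is central in A) that is finitely generated as an R-module. Then every simple right A-module has finite length as an R-module (via restriction of scalars along algebraMap R A). -/
/-- Key step in Lemma 5.8: every simple right `A`-module over a module-finite algebra
`A` over a noetherian local ring `R` has finite length over `R`. -/
theorem isFiniteLength_base_of_isSimpleModule
    {R A M : Type*} [CommRing R] [IsNoetherianRing R] [IsLocalRing R]
    [Ring A] [Algebra R A] [Module.Finite R A]
    [AddCommGroup M] [Module Aᵐᵒᵖ M] [Module R M] [IsScalarTower R Aᵐᵒᵖ M]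
    (hM : IsSimpleModule Aᵐᵒᵖ M) :
    IsFiniteLength R M := by
  classical
  have hnontriv : Nontrivial M := IsSimpleModule.nontrivial Aᵐᵒᵖ M
  obtain ⟨x, hx⟩ := exists_ne (0 : M)
  -- M is finite over R
  have hspan : Submodule.span Aᵐᵒᵖ {x} = ⊤ := by
    rcases hM.1.2 (Submodule.span Aᵐᵒᵖ {x}) with h | h
    · have hmem := Submodule.mem_span_singleton_self (R := Aᵐᵒᵖ) x
      rw [h] at hmem
      exact absurd (by simpa using hmem) hx
    · exact h
  have hAop : Module.Finite R Aᵐᵒᵖ :=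
    Module.Finite.equiv (MulOpposite.opLinearEquiv R : A ≃ₗ[R] Aᵐᵒᵖ)
  have hfin : Module.Finite R M := by
    have hsurj : Function.Surjective
        ((LinearMap.toSpanSingleton Aᵐᵒᵖ M x).restrictScalars R) := by
      intro m
      have : m ∈ Submodule.span Aᵐᵒᵖ {x} := hspan ▸ Submodule.mem_top
      obtain ⟨a, ha⟩ := Submodule.mem_span_singleton.mp this
      exact ⟨a, ha⟩
    exact Module.Finite.of_surjective _ hsurj
  -- key scalar identity
  have key : ∀ (r : R) (a : Aᵐᵒᵖ) (m : M), a • (r • m) = r • (a • m) := by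
    intro r a m
    have h1 : r • m = (algebraMap R Aᵐᵒᵖ r) • m := (algebraMap_smul Aᵐᵒᵖ r m).symm
    have h2 : r • (a • m) = (algebraMap R Aᵐᵒᵖ r) • (a • m) :=
      (algebraMap_smul Aᵐᵒᵖ r (a • m)).symm
    rw [h1, h2, smul_smul, smul_smul, Algebra.commutes]
  -- 𝔪 • ⊤ is an Aᵐᵒᵖ-submodule
  have hNsmul : ∀ (a : Aᵐᵒᵖ) {m : M},
      m ∈ (IsLocalRing.maximalIdeal R • ⊤ : Submodule R M) →
      a • m ∈ (IsLocalRing.maximalIdeal R • ⊤ : Submodule R M) := by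
    intro a m hm
    refine Submodule.smul_induction_on hm (fun r hr n _ => ?_) (fun m₁ m₂ h1 h2 => ?_)
    · rw [key r a n]
      exact Submodule.smul_mem_smul hr Submodule.mem_top
    · rw [smul_add]
      exact Submodule.add_mem _ h1 h2
  let N' : Submodule Aᵐᵒᵖ M :=
    { carrier := (IsLocalRing.maximalIdeal R • ⊤ : Submodule R M)
      add_mem' := fun h1 h2 => Submodule.add_mem _ h1 h2
      zero_mem' := Submodule.zero_mem _
      smul_mem' := fun a m hm => hNsmul a hm }
  have hNbot : (IsLocalRing.maximalIdeal R • ⊤ : Submodule R M) = ⊥ := by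
    rcases hM.1.2 N' with h | h
    · rw [← SetLike.coe_set_eq] at h ⊢
      exact h
    · exfalso
      have htop : (IsLocalRing.maximalIdeal R • ⊤ : Submodule R M) = ⊤ := by
        rw [← SetLike.coe_set_eq] at h ⊢
        exact h
      have := Submodule.eq_bot_of_le_smul_of_le_jacobson_bot (IsLocalRing.maximalIdeal R) ⊤
        (Module.finite_def.mp hfin) htop.ge
        (by rw [IsLocalRing.jacobson_eq_maximalIdeal ⊥ bot_ne_top])
      exact hx (by rw [eq_bot_iff] at this; simpa using this Submodule.mem_top)
  -- M is torsion by 𝔪, hence a module over the residue field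
  have htors : Module.IsTorsionBySet R M (IsLocalRing.maximalIdeal R) := by
    intro m r
    have : (r : R) • m ∈ (IsLocalRing.maximalIdeal R • ⊤ : Submodule R M) :=
      Submodule.smul_mem_smul r.2 Submodule.mem_top
    simpa [hNbot] using this
  letI : Module (R ⧸ IsLocalRing.maximalIdeal R) M := htors.module
  haveI : IsScalarTower R (R ⧸ IsLocalRing.maximalIdeal R) M := htors.isScalarTower
  haveI hfink : Module.Finite (R ⧸ IsLocalRing.maximalIdeal R) M :=
    Module.Finite.of_restrictScalars_finite R (R ⧸ IsLocalRing.maximalIdeal R) M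
  haveI : IsArtinian (R ⧸ IsLocalRing.maximalIdeal R) M := by
    letI : Field (R ⧸ IsLocalRing.maximalIdeal R) :=
      Ideal.Quotient.field (IsLocalRing.maximalIdeal R)
    exact inferInstance
  -- transfer Artinian property down to R
  have hmk : ∀ (c : R ⧸ IsLocalRing.maximalIdeal R) (m : M), ∃ r : R, c • m = r • m := by
    intro c m
    obtain ⟨r, rfl⟩ := Ideal.Quotient.mk_surjective c
    refine ⟨r, ?_⟩
    rw [← algebraMap_smul (R ⧸ IsLocalRing.maximalIdeal R) r m, Ideal.Quotient.algebraMap_eq]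
  let f : Submodule R M → Submodule (R ⧸ IsLocalRing.maximalIdeal R) M := fun P =>
    { carrier := P
      add_mem' := fun h1 h2 => P.add_mem h1 h2
      zero_mem' := P.zero_mem
      smul_mem' := fun c m hm => by
        obtain ⟨r, hr⟩ := hmk c m
        rw [hr]; exact P.smul_mem r hm }
  let femb : Submodule R M ↪o Submodule (R ⧸ IsLocalRing.maximalIdeal R) M :=
    { toFun := f
      inj' := fun P Q h => by
        rw [← SetLike.coe_set_eq]
        exact congrArg (fun (S : Submodule (R ⧸ IsLocalRing.maximalIdeal R) M) => S.carrier) h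
      map_rel_iff' := fun {P Q} => Iff.rfl }
  haveI hart : IsArtinian R M :=
    ⟨femb.ltEmbedding.wellFounded
      (IsWellFounded.wf (α := Submodule (R ⧸ IsLocalRing.maximalIdeal R) M) (r := (· < ·)))⟩
  haveI : IsNoetherian R M := isNoetherian_of_isNoetherianRing_of_finite R M
  exact (isFiniteLength_iff_isNoetherian_isArtinian).mpr ⟨inferInstance, hart⟩
end

section
/- Let f : Y → X be a finite morphism of schemes with X locally noetherian. Then for every closed subset W of the underlying topological space of Y, the topological Krull dimension of the image f(W), equipped with the subspace topology, equals the topological Krull dimension of W. -/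
open AlgebraicGeometry CategoryTheory TopologicalSpace

section TopAux

variable {A : Type*} {B : Type*} [TopologicalSpace A] [TopologicalSpace B]

theorem topologicalKrullDim_eq_of_maps [T0Space A] [T0Space B] [QuasiSober A] [QuasiSober B]
    (g : A → B) (hcont : Continuous g) (hsurj : Function.Surjective g)
    (hspec : SpecializingMap g) (hinj : ∀ a b : A, a ⤳ b → g a = g b → a = b) :
    topologicalKrullDim A = topologicalKrullDim B := by
  letI : PartialOrder A := specializationOrder A
  letI : PartialOrder B := specializationOrder B
  have lift : ∀ (n : ℕ) (p : LTSeries B), p.length = n → ∀ a : A, g a = p.last →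
      ∃ q : LTSeries A, q.length = n ∧ q.last = a := by
    intro n
    induction n with
    | zero => exact fun p hp a ha => ⟨RelSeries.singleton _ a, rfl, rfl⟩
    | succ n ih =>
      intro p hp a ha
      have h0 : p.length ≠ 0 := by omega
      have hrel : p.eraseLast.last < p.last := p.eraseLast_last_rel_last h0
      have hs : g a ⤳ p.eraseLast.last := by
        rw [ha]; exact hrel.le
      obtain ⟨a', ha', hga'⟩ := hspec hs
      obtain ⟨q, hq, hqlast⟩ := ih p.eraseLast (by simp [RelSeries.eraseLast]; omega) a' hga'
      have hne : a' ≠ a := by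
        intro hcontra
        apply ne_of_lt hrel
        rw [← hga', hcontra, ha]
      have hlt : q.last < a := by
        rw [hqlast]
        exact lt_of_le_of_ne (ha' : a ⤳ a') hne
      exact ⟨q.snoc a hlt, by simp [RelSeries.snoc, RelSeries.append, hq], RelSeries.last_snoc _ _ _⟩
  have hmono : Monotone g := fun a b hab => (show b ⤳ a from hab).map hcont
  have hstrict : StrictMono g := by
    intro a b hab
    refine lt_of_le_of_ne (hmono hab.le) fun hcontra => ?_
    exact hab.ne (hinj b a (hab.le : b ⤳ a) hcontra.symm).symm
  have e1 : topologicalKrullDim A = Order.krullDim A :=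
    Order.krullDim_eq_of_orderIso irreducibleSetEquivPoints
  have e2 : topologicalKrullDim B = Order.krullDim B :=
    Order.krullDim_eq_of_orderIso irreducibleSetEquivPoints
  have hle1 : Order.krullDim A ≤ Order.krullDim B := Order.krullDim_le_of_strictMono g hstrict
  have hle2 : Order.krullDim B ≤ Order.krullDim A := by
    unfold Order.krullDim
    refine iSup_le fun p => ?_
    obtain ⟨a, ha⟩ := hsurj p.last
    obtain ⟨q, hq, -⟩ := lift p.length p rfl a ha
    exact hq ▸ (le_iSup_of_le q le_rfl)
  rw [e1, e2]
  exact le_antisymm hle1 hle2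

end TopAux

lemma PrimeSpectrum.eq_of_specializes_of_comap_eq {R S : Type*} [CommRing R] [CommRing S]
    (φ : R →+* S) (hφ : φ.IsIntegral) {a b : PrimeSpectrum S} (h : a ⤳ b)
    (he : PrimeSpectrum.comap φ a = PrimeSpectrum.comap φ b) : a = b := by
  by_contra hne
  have hlt : a < b := lt_of_le_of_ne ((PrimeSpectrum.le_iff_specializes a b).mpr h) hne
  have hlt' : a.asIdeal < b.asIdeal := hlt
  obtain ⟨x, hxb, hxa⟩ := SetLike.exists_of_lt hlt'
  letI := φ.toAlgebra
  haveI := a.isPrime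
  have hcomaplt : a.asIdeal.comap (algebraMap R S) < b.asIdeal.comap (algebraMap R S) :=
    Ideal.comap_lt_comap_of_integral_mem_sdiff hlt'.le ⟨hxb, hxa⟩ (hφ x)
  exact hcomaplt.ne (congrArg PrimeSpectrum.asIdeal he)

namespace AlgebraicGeometry

lemma eq_of_specializes_affine {Y : Scheme} {R : CommRingCat} (f : Y ⟶ Spec R)
    [IsFinite f] {a b : Y} (h : a ⤳ b) (he : f.base a = f.base b) : a = b := by
  haveI : IsAffine Y := isAffine_of_isAffineHom f
  have hnat : Y.isoSpec.hom ≫ Spec.map f.appTop = f ≫ (Spec R).isoSpec.hom :=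
    Scheme.isoSpec_hom_naturality f
  have hint : (f.appTop).hom.IsIntegral := IsIntegralHom.isIntegral_app f ⊤ (isAffineOpen_top _)
  set a' := Y.isoSpec.hom.base a with ha'
  set b' := Y.isoSpec.hom.base b with hb'
  have h' : a' ⤳ b' := h.map Y.isoSpec.hom.continuous
  have hcomap : (Spec.map f.appTop).base a' = (Spec.map f.appTop).base b' := by
    rw [ha', hb', ← Scheme.Hom.comp_apply, ← Scheme.Hom.comp_apply, hnat,
      Scheme.Hom.comp_apply, Scheme.Hom.comp_apply, he]
  have : a' = b' := PrimeSpectrum.eq_of_specializes_of_comap_eq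
    (f.appTop.hom : _ →+* _) hint h' hcomap
  exact Y.isoSpec.hom.homeomorph.injective this

lemma eq_of_specializes_of_isFinite {X Y : Scheme} (f : Y ⟶ X) [IsFinite f]
    {a b : Y} (h : a ⤳ b) (he : f.base a = f.base b) : a = b := by
  let 𝒰 := X.affineCover
  let U : X.Opens := (𝒰.f (𝒰.idx (f.base b))).opensRange
  have hU : IsAffineOpen U := isAffineOpen_opensRange _
  have hbU : f.base b ∈ U := 𝒰.covers (f.base b)
  let V : Y.Opens := f ⁻¹ᵁ U
  have hbV : b ∈ V := hbU
  have haV : a ∈ V := show f.base a ∈ U by rw [he]; exact hbU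
  have hV : (⟨a, haV⟩ : V) ⤳ ⟨b, hbV⟩ := by
    rw [specializes_iff_mem_closure, closure_subtype, Set.image_singleton]
    exact specializes_iff_mem_closure.mp h
  haveI : IsFinite (f ∣_ U) := inferInstance
  haveI : IsAffine U.toScheme := hU
  let g := (f ∣_ U) ≫ U.toScheme.isoSpec.hom
  have hbase : (f ∣_ U).base ⟨a, haV⟩ = (f ∣_ U).base ⟨b, hbV⟩ := by
    apply Subtype.ext
    have h1 := morphismRestrict_base_coe f U ⟨a, haV⟩
    have h2 := morphismRestrict_base_coe f U ⟨b, hbV⟩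
    exact h1.trans (he.trans h2.symm)
  have hge : g.base ⟨a, haV⟩ = g.base ⟨b, hbV⟩ := by
    exact congrArg U.toScheme.isoSpec.hom.base hbase
  have := eq_of_specializes_affine g hV hge
  exact congrArg Subtype.val this

lemma specializingMap_of_isFinite {X Y : Scheme} (f : Y ⟶ X) [IsFinite f] :
    SpecializingMap f.base := by
  wlog hX : ∃ R, X = Spec R
  · show topologically @SpecializingMap f
    rw [IsZariskiLocalAtTarget.iff_of_openCover (P := topologically @SpecializingMap) X.affineCover]
    intro i
    haveI hfin : IsFinite (X.affineCover.pullbackHom f i) :=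
      MorphismProperty.IsStableUnderBaseChange.of_isPullback (P := @IsFinite) (.of_hasPullback _ _) ‹IsFinite f›
    exact this (X.affineCover.pullbackHom f i) ⟨_, rfl⟩
  obtain ⟨R, rfl⟩ := hX
  haveI : IsAffine Y := isAffine_of_isAffineHom f
  have hint : (f.appTop).hom.IsIntegral := IsIntegralHom.isIntegral_app f ⊤ (isAffineOpen_top _)
  have hf : f = Y.isoSpec.hom ≫ Spec.map f.appTop ≫ (Spec R).isoSpec.inv := by
    rw [Scheme.isoSpec_inv_naturality, Iso.hom_inv_id_assoc]
  rw [hf]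
  have h1 : SpecializingMap (Y.isoSpec.hom.base : Y → _) :=
    Y.isoSpec.hom.homeomorph.isClosedMap.specializingMap
  have h2 : SpecializingMap ((Spec.map f.appTop).base : _ → _) :=
    (PrimeSpectrum.isClosedMap_comap_of_isIntegral _ hint).specializingMap
  have h3 : SpecializingMap ((Spec R).isoSpec.inv.base : _ → _) :=
    (Spec R).isoSpec.inv.homeomorph.isClosedMap.specializingMap
  simp only [Scheme.Hom.comp_base, TopCat.hom_comp, ContinuousMap.coe_comp]
  exact h1.comp (h2.comp h3)

lemma isClosedMap_of_isFinite {X Y : Scheme} (f : Y ⟶ X) [IsFinite f] :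
    IsClosedMap f.base :=
  (isClosedMap_iff_specializingMap f).mpr (specializingMap_of_isFinite f)

end AlgebraicGeometry

/-- Lemma 4.8(2): for a finite morphism `f : Y → X` with `X` locally noetherian and
`W ⊆ Y` closed, `dim f(W) = dim W`. -/
theorem topologicalKrullDim_image_of_isFinite
    {X Y : Scheme} (f : Y ⟶ X) [IsFinite f] [IsLocallyNoetherian X]
    (W : Set Y) (hW : IsClosed W) :
    topologicalKrullDim (f.base '' W) = topologicalKrullDim W := by
  have hclosed : IsClosedMap f.base := isClosedMap_of_isFinite f
  have hWX : IsClosed (f.base '' W) := hclosed _ hW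
  set g : W → (f.base '' W : Set X) := fun a => ⟨f.base a, Set.mem_image_of_mem _ a.2⟩ with hg
  have hcont : Continuous g :=
    ((f.continuous).comp continuous_subtype_val).subtype_mk _
  have hsurj : Function.Surjective g := by
    rintro ⟨x, y, hyW, rfl⟩
    exact ⟨⟨y, hyW⟩, rfl⟩
  have hclosedg : IsClosedMap g := by
    intro C hC
    have h1 : IsClosed (Subtype.val '' C : Set Y) :=
      hW.isClosedEmbedding_subtypeVal.isClosedMap _ hC
    have h2 : IsClosed (f.base '' (Subtype.val '' C)) := hclosed _ h1
    have heq : g '' C = Subtype.val ⁻¹' (f.base '' (Subtype.val '' C)) := by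
      ext ⟨x, hx⟩
      simp only [Set.mem_image, Set.mem_preimage]
      constructor
      · rintro ⟨c, hc, hgc⟩
        exact ⟨c, ⟨c, hc, rfl⟩, congrArg Subtype.val hgc⟩
      · rintro ⟨y, ⟨c, hc, rfl⟩, hyx⟩
        exact ⟨c, hc, Subtype.ext hyx⟩
    rw [heq]
    exact h2.preimage continuous_subtype_val
  have hinj : ∀ a b : W, a ⤳ b → g a = g b → a = b := by
    intro a b hab he
    have hab' : (a : Y) ⤳ (b : Y) := hab.map continuous_subtype_val
    have he' : f.base a = f.base b := congrArg Subtype.val he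
    exact Subtype.ext (eq_of_specializes_of_isFinite f hab' he')
  haveI : QuasiSober W := hW.isClosedEmbedding_subtypeVal.quasiSober
  haveI : QuasiSober (f.base '' W : Set X) := hWX.isClosedEmbedding_subtypeVal.quasiSober
  exact (topologicalKrullDim_eq_of_maps g hcont hsurj hclosedg.specializingMap hinj).symm
end

section
/- Let f : Y → X be a finite morphism of schemes with X locally noetherian. Then for every closed subset Z of the underlying topological space of X that is contained in the set-theoretic image of f, the topological Krull dimension of the preimage f⁻¹(Z), equipped with the subspace topology, equals the topological Krull dimension of Z. -/
open AlgebraicGeometry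

open TopologicalSpace Topology Order CategoryTheory

section TopologyAux

variable {A B : Type*} [TopologicalSpace A] [TopologicalSpace B]

lemma auxImageClosureSingleton {g : A → B} (hc : Continuous g) (hcl : IsClosedMap g) (a : A) :
    g '' closure {a} = closure {g a} := by
  apply subset_antisymm
  · simpa using image_closure_subset_closure_image (s := ({a} : Set A)) hc
  · exact closure_minimal (Set.singleton_subset_iff.mpr
      ⟨a, subset_closure rfl, rfl⟩) (hcl _ isClosed_closure)

/-- If `g` is continuous closed, with no specializations within fibers, then
`dim A ≤ dim B`. -/
lemma auxDimLeOfNoSpec [QuasiSober A] [T0Space B] {g : A → B}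
    (hc : Continuous g) (hcl : IsClosedMap g)
    (hfib : ∀ a a' : A, a ⤳ a' → g a = g a' → a = a') :
    topologicalKrullDim A ≤ topologicalKrullDim B := by
  apply krullDim_le_of_strictMono (IrreducibleCloseds.map g hc)
  intro D D' hlt
  have hsub : g '' (D : Set A) ⊆ g '' (D' : Set A) :=
    Set.image_mono (SetLike.coe_subset_coe.mpr hlt.le)
  refine lt_of_le_of_ne (IrreducibleCloseds.map_mono hc hlt.le) fun heq => ?_
  have heq' : g '' (D : Set A) = g '' (D' : Set A) := by
    have := congrArg SetLike.coe heq
    rw [IrreducibleCloseds.coe_map, IrreducibleCloseds.coe_map, (hcl _ D.isClosed).closure_eq,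
      (hcl _ D'.isClosed).closure_eq] at this
    exact this
  -- generic points
  have hgD : closure {IsIrreducible.genericPoint D.isIrreducible} = (D : Set A) := by
    have := IsIrreducible.isGenericPoint_genericPoint_closure D.isIrreducible
    rwa [D.isClosed.closure_eq] at this
  have hgD' : closure {IsIrreducible.genericPoint D'.isIrreducible} = (D' : Set A) := by
    have := IsIrreducible.isGenericPoint_genericPoint_closure D'.isIrreducible
    rwa [D'.isClosed.closure_eq] at this
  set ξ := IsIrreducible.genericPoint D.isIrreducible
  set ξ' := IsIrreducible.genericPoint D'.isIrreducible
  have h1 : closure {g ξ} = closure {g ξ'} := by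
    rw [← auxImageClosureSingleton hc hcl ξ, ← auxImageClosureSingleton hc hcl ξ',
      hgD, hgD', heq']
  have h2 : g ξ = g ξ' := by
    have s1 : g ξ ⤳ g ξ' := by
      rw [specializes_iff_mem_closure, h1]; exact subset_closure rfl
    have s2 : g ξ' ⤳ g ξ := by
      rw [specializes_iff_mem_closure, ← h1]; exact subset_closure rfl
    exact (s1.antisymm s2).eq
  have h3 : ξ' ⤳ ξ := by
    rw [specializes_iff_mem_closure, hgD']
    exact SetLike.coe_subset_coe.mpr hlt.le (by rw [← hgD]; exact subset_closure rfl)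
  have h4 : ξ' = ξ := hfib ξ' ξ h3 h2.symm
  have : (D : Set A) = (D' : Set A) := by rw [← hgD, ← hgD', h4]
  exact hlt.ne (SetLike.coe_injective this)

/-- Lifting an irreducible closed inside the image of a closed set. -/
lemma auxLift [QuasiSober B] {g : A → B} (hc : Continuous g) (hcl : IsClosedMap g)
    (C : IrreducibleCloseds B) {E : Set A} (hE : IsClosed E)
    (hCE : (C : Set B) ⊆ g '' E) :
    ∃ D : IrreducibleCloseds A, (D : Set A) ⊆ E ∧ g '' (D : Set A) = (C : Set B) := by
  have hgen : closure {IsIrreducible.genericPoint C.isIrreducible} = (C : Set B) := by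
    have := IsIrreducible.isGenericPoint_genericPoint_closure C.isIrreducible
    rwa [C.isClosed.closure_eq] at this
  set c := IsIrreducible.genericPoint C.isIrreducible
  have hcC : c ∈ (C : Set B) := by rw [← hgen]; exact subset_closure rfl
  obtain ⟨a, haE, hga⟩ := hCE hcC
  refine ⟨⟨closure {a}, isIrreducible_singleton.closure, isClosed_closure⟩,
    closure_minimal (Set.singleton_subset_iff.mpr haE) hE, ?_⟩
  show g '' closure {a} = (C : Set B)
  rw [auxImageClosureSingleton hc hcl a, hga, hgen]

lemma auxLiftChain [QuasiSober B] {g : A → B}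
    (hc : Continuous g) (hcl : IsClosedMap g) (hsurj : Function.Surjective g) :
    ∀ (n : ℕ) (p : LTSeries (IrreducibleCloseds B)), p.length = n →
      ∃ q : LTSeries (IrreducibleCloseds A), q.length = n ∧
        g '' (q.head : Set A) = (p.head : Set B) := by
  intro n
  induction n with
  | zero =>
      intro p _
      obtain ⟨D, -, hD⟩ := auxLift hc hcl p.head isClosed_univ
        (by rw [Set.image_univ, hsurj.range_eq]; exact Set.subset_univ _)
      exact ⟨RelSeries.singleton _ D, rfl, hD⟩
  | succ n ih =>
      intro p hp
      have hlen0 : p.length ≠ 0 := by omega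
      obtain ⟨q', hq'len, hq'head⟩ := ih (p.tail hlen0) (by simpa using by omega)
      have htail : (p.tail hlen0).head = p 1 := RelSeries.head_tail p hlen0
      have h01 : (0 : Fin (p.length + 1)) < 1 := by
        rw [Fin.lt_def, Fin.val_zero, Fin.val_one']
        rw [Nat.mod_eq_of_lt (by omega)]
        omega
      have hstep : p.head < p 1 := p.strictMono h01
      have hCE : ((p.head : Set B)) ⊆ g '' (q'.head : Set A) := by
        rw [hq'head, htail]
        exact SetLike.coe_subset_coe.mpr hstep.le
      obtain ⟨D, hDE, hDimg⟩ := auxLift hc hcl p.head q'.head.isClosed hCE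
      have hne : D ≠ q'.head := by
        intro hDq
        apply hstep.ne
        apply SetLike.coe_injective
        rw [← hDimg, hDq, hq'head, htail]
      have hlt : D < q'.head := lt_of_le_of_ne (SetLike.coe_subset_coe.mp hDE) hne
      refine ⟨q'.cons D hlt, ?_, ?_⟩
      · rw [RelSeries.cons_length, hq'len]
      · rw [RelSeries.head_cons]; exact hDimg
  
lemma auxDimLeOfSurj [QuasiSober B] {g : A → B}
    (hc : Continuous g) (hcl : IsClosedMap g) (hsurj : Function.Surjective g) :
    topologicalKrullDim B ≤ topologicalKrullDim A := by
  rw [topologicalKrullDim, topologicalKrullDim, krullDim, krullDim]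
  apply iSup_le
  intro p
  obtain ⟨q, hq, -⟩ := auxLiftChain hc hcl hsurj p.length p rfl
  rw [← hq]
  exact le_iSup (fun q : LTSeries (IrreducibleCloseds A) => (q.length : WithBot ℕ∞)) q

end TopologyAux

section RingAux

variable {R S : Type*} [CommRing R] [CommRing S]

lemma auxComapNoSpec (φ : R →+* S) (hφ : φ.IsIntegral) {q q' : PrimeSpectrum S}
    (h : q ≤ q') (he : PrimeSpectrum.comap φ q = PrimeSpectrum.comap φ q') : q = q' := by
  letI := φ.toAlgebra
  by_contra hne
  have hlt : q.asIdeal < q'.asIdeal :=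
    lt_of_le_of_ne h fun h' => hne (PrimeSpectrum.ext h')
  obtain ⟨x, hxq', hxq⟩ := SetLike.exists_of_lt hlt
  haveI := q.isPrime
  have hcomap := Ideal.comap_lt_comap_of_integral_mem_sdiff (S := S)
    hlt.le ⟨hxq', hxq⟩ (hφ x)
  have : q.asIdeal.comap (algebraMap R S) = q'.asIdeal.comap (algebraMap R S) := by
    have := congrArg PrimeSpectrum.asIdeal he
    simpa [RingHom.algebraMap_toAlgebra] using this
  exact hcomap.ne this

lemma auxComapSpecializing (φ : R →+* S) (hφ : φ.IsIntegral) :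
    SpecializingMap (PrimeSpectrum.comap φ) := by
  letI := φ.toAlgebra
  haveI : Algebra.IsIntegral R S := ⟨hφ⟩
  intro q x' h
  haveI := x'.isPrime
  have hle : q.asIdeal.comap (algebraMap R S) ≤ x'.asIdeal :=
    (PrimeSpectrum.le_iff_specializes _ _).mpr h
  obtain ⟨Q, hQ, hQp, hQc⟩ :=
    Ideal.exists_ideal_over_prime_of_isIntegral x'.asIdeal q.asIdeal hle
  refine ⟨⟨Q, hQp⟩, ?_, ?_⟩
  · exact (PrimeSpectrum.le_iff_specializes q ⟨Q, hQp⟩).mp hQ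
  · exact PrimeSpectrum.ext hQc

end RingAux

section SchemeAux

namespace AlgebraicGeometry

variable {Y X : Scheme} (f : Y ⟶ X)

lemma auxAppTopFinite [IsFinite f] [IsAffine X] :
    RingHom.Finite (f.appTop.hom) :=
  Scheme.Hom.finite_appTop f

lemma auxNaturalitySq [IsAffine X] [IsAffine Y] (y : Y) :
    PrimeSpectrum.comap (f.appTop.hom) (Y.isoSpec.hom.base y) =
      X.isoSpec.hom.base (f.base y) := by
  have hsq := Scheme.isoSpec_hom_naturality f
  have := congrArg (fun g : Y ⟶ Spec Γ(X, ⊤) => g.base y) hsq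
  exact this

lemma auxNoSpecAffine [IsFinite f] [IsAffine X] [IsAffine Y]
    {y y' : Y} (h : y ⤳ y') (he : f.base y = f.base y') : y = y' := by
  have hfin := auxAppTopFinite f
  have hint := hfin.to_isIntegral
  have h1 : Y.isoSpec.hom.base y ⤳ Y.isoSpec.hom.base y' :=
    h.map Y.isoSpec.hom.base.hom.continuous
  have h2 : PrimeSpectrum.comap (f.appTop.hom) (Y.isoSpec.hom.base y) =
      PrimeSpectrum.comap (f.appTop.hom) (Y.isoSpec.hom.base y') := by
    rw [auxNaturalitySq, auxNaturalitySq, he]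
  have h3 := auxComapNoSpec (f.appTop.hom) hint
    ((PrimeSpectrum.le_iff_specializes _ _).mpr h1) h2
  have hinj : Function.Injective (Y.isoSpec.hom.base) := by
    intro a b hab
    have := (Scheme.homeoOfIso Y.isoSpec).injective (a₁ := a) (a₂ := b)
      (by simpa [Scheme.homeoOfIso_apply] using hab)
    exact this
  exact hinj h3

lemma auxCancelHomInv [IsAffine Y] (z : Y) :
    Y.isoSpec.inv.base (Y.isoSpec.hom.base z) = z := by
  have : (Y.isoSpec.hom ≫ Y.isoSpec.inv).base z = z := by
    rw [Iso.hom_inv_id]; simp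
  simpa [Scheme.Hom.comp_apply] using this

lemma auxCancelInvHom [IsAffine Y] (z : Spec Γ(Y, ⊤)) :
    Y.isoSpec.hom.base (Y.isoSpec.inv.base z) = z := by
  have : (Y.isoSpec.inv ≫ Y.isoSpec.hom).base z = z := by
    rw [Iso.inv_hom_id]; simp
  simpa [Scheme.Hom.comp_apply] using this

lemma auxSpecializingAffine [IsFinite f] [IsAffine X] [IsAffine Y] :
    SpecializingMap f.base := by
  have hfin := auxAppTopFinite f
  have hint := hfin.to_isIntegral
  intro y x' h
  have h1 : PrimeSpectrum.comap (f.appTop.hom) (Y.isoSpec.hom.base y) ⤳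
      X.isoSpec.hom.base x' := by
    rw [auxNaturalitySq]
    exact h.map X.isoSpec.hom.base.hom.continuous
  obtain ⟨Q, hQspec, hQeq⟩ := auxComapSpecializing (f.appTop.hom) hint h1
  refine ⟨Y.isoSpec.inv.base Q, ?_, ?_⟩
  · have := hQspec.map Y.isoSpec.inv.base.hom.continuous
    rwa [auxCancelHomInv] at this
  · have hinj : Function.Injective (X.isoSpec.hom.base) := by
      intro a b hab
      exact (Scheme.homeoOfIso X.isoSpec).injective
        (by simpa [Scheme.homeoOfIso_apply] using hab)
    apply hinj
    rw [← auxNaturalitySq]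
    erw [auxCancelInvHom]
    rw [hQeq]

lemma auxNoSpec [IsFinite f] {y y' : Y} (h : y ⤳ y')
    (he : f.base y = f.base y') : y = y' := by
  obtain ⟨_, ⟨U, hU, rfl⟩, hyU, -⟩ := X.isBasis_affineOpens.exists_subset_of_mem_open
    (Set.mem_univ (f.base y)) isOpen_univ
  haveI : IsFinite (f ∣_ U) := inferInstance
  haveI : IsAffine ↑U := hU
  haveI : IsAffine ↑(f ⁻¹ᵁ U) := hU.preimage f
  have hb : ⇑(f ∣_ U).base = (U.1).restrictPreimage ⇑f.base := morphismRestrict_base f U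
  have hyV : y ∈ f ⁻¹ᵁ U := hyU
  have hy'V : y' ∈ f ⁻¹ᵁ U := show f.base y' ∈ U by rw [← he]; exact hyU
  have hs : (⟨y, hyV⟩ : ↥(f ⁻¹ᵁ U)) ⤳ ⟨y', hy'V⟩ :=
    IsInducing.subtypeVal.specializes_iff.mp h
  have he' : (f ∣_ U).base ⟨y, hyV⟩ = (f ∣_ U).base ⟨y', hy'V⟩ := by
    rw [hb]
    exact Subtype.ext he
  have := auxNoSpecAffine (f ∣_ U) hs he'
  exact congrArg Subtype.val this

lemma auxSpecializing [IsFinite f] : SpecializingMap f.base := by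
  intro y x' h
  obtain ⟨_, ⟨U, hU, rfl⟩, hx'U, -⟩ := X.isBasis_affineOpens.exists_subset_of_mem_open
    (Set.mem_univ x') isOpen_univ
  haveI : IsFinite (f ∣_ U) := inferInstance
  haveI : IsAffine ↑U := hU
  haveI : IsAffine ↑(f ⁻¹ᵁ U) := hU.preimage f
  have hb : ⇑(f ∣_ U).base = (U.1).restrictPreimage ⇑f.base := morphismRestrict_base f U
  have hfyU : f.base y ∈ U := h.mem_open U.isOpen hx'U
  have hyV : y ∈ f ⁻¹ᵁ U := hfyU
  have hval : (f ∣_ U).base ⟨y, hyV⟩ = ⟨f.base y, hfyU⟩ := by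
    rw [hb]; rfl
  have hspec : (f ∣_ U).base ⟨y, hyV⟩ ⤳ ⟨x', hx'U⟩ := by
    rw [hval]
    exact IsInducing.subtypeVal.specializes_iff.mp h
  obtain ⟨⟨yv, hyvV⟩, h1, h2⟩ := auxSpecializingAffine (f ∣_ U) hspec
  refine ⟨yv, ?_, ?_⟩
  · exact h1.map continuous_subtype_val
  · have h3 := congrArg Subtype.val h2
    rw [hb] at h3
    exact h3

lemma auxIsClosedMap [IsFinite f] : IsClosedMap f.base :=
  (isClosedMap_iff_specializingMap f).mpr (auxSpecializing f)

end AlgebraicGeometry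

end SchemeAux

/-- Lemma 4.8(2): for a finite morphism `f : Y → X` with `X` locally noetherian and
`Z ⊆ im(f)` closed, `dim f⁻¹(Z) = dim Z`. -/
theorem topologicalKrullDim_preimage_of_isFinite
    {X Y : Scheme} (f : Y ⟶ X) [IsFinite f] [IsLocallyNoetherian X]
    (Z : Set X) (hZ : IsClosed Z) (hZr : Z ⊆ Set.range f.base) :
    topologicalKrullDim (f.base ⁻¹' Z) = topologicalKrullDim Z := by
  have hWclosed : IsClosed (f.base ⁻¹' Z) := hZ.preimage f.base.hom.continuous
  haveI : QuasiSober ↥(f.base ⁻¹' Z) := hWclosed.isClosedEmbedding_subtypeVal.quasiSober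
  haveI : QuasiSober ↥Z := hZ.isClosedEmbedding_subtypeVal.quasiSober
  set g : ↥(f.base ⁻¹' Z) → ↥Z := Z.restrictPreimage f.base with hg
  have hc : Continuous g := f.base.hom.continuous.restrictPreimage
  have hcl : IsClosedMap g := (AlgebraicGeometry.auxIsClosedMap f).restrictPreimage Z
  have hsurj : Function.Surjective g := by
    rintro ⟨z, hz⟩
    obtain ⟨y, hy⟩ := hZr hz
    exact ⟨⟨y, by simp [Set.mem_preimage, hy, hz]⟩, Subtype.ext hy⟩
  have hfib : ∀ a a' : ↥(f.base ⁻¹' Z), a ⤳ a' → g a = g a' → a = a' := by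
    intro a a' h he
    apply Subtype.ext
    apply AlgebraicGeometry.auxNoSpec f (h.map continuous_subtype_val)
    exact congrArg Subtype.val he
  exact le_antisymm (auxDimLeOfNoSpec hc hcl hfib) (auxDimLeOfSurj hc hcl hsurj)
end

section
/- Let R be a commutative ring, P a finite set of prime ideals of R, and let S = {r ∈ R : r ∉ p for every p ∈ P}, which is a multiplicatively closed subset (submonoid) of R. Then for any R-module M, the localization S⁻¹M is the zero module if and only if the localization M_p is the zero module for every p ∈ P. -/
/-- Key computation in Proposition 4.13: for a finite set `P` of primes of `R` and
`S = R \ ⋃ P`, one has `S⁻¹M = 0` iff `M_p = 0` for all `p ∈ P`. -/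
theorem localizedModule_subsingleton_iff_forall_prime
    {R : Type*} [CommRing R] (P : Finset (PrimeSpectrum R))
    (S : Submonoid R) (hS : ∀ r : R, r ∈ S ↔ ∀ p ∈ P, r ∉ p.asIdeal)
    (M : Type*) [AddCommGroup M] [Module R M] :
    Subsingleton (LocalizedModule S M) ↔
      ∀ p ∈ P, Subsingleton (LocalizedModule p.asIdeal.primeCompl M) := by
  simp_rw [LocalizedModule.subsingleton_iff]
  constructor
  · intro h p hp m
    obtain ⟨r, hr, hrm⟩ := h m
    exact ⟨r, (hS r).mp hr p hp, hrm⟩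
  · intro h m
    -- annihilator of m
    set I : Ideal R := (Submodule.span R {m}).annihilator with hI
    have hImem : ∀ r : R, r ∈ I ↔ r • m = 0 := fun r =>
      Submodule.mem_annihilator_span_singleton m r
    have hnot : ∀ p ∈ P, ¬ I ≤ p.asIdeal := by
      intro p hp hle
      obtain ⟨r, hr, hrm⟩ := h p hp m
      exact hr (hle ((hImem r).mpr hrm))
    by_cases hPe : P.Nonempty
    · obtain ⟨q, hq⟩ := hPe
      have := (Ideal.subset_union_prime (s := P) (f := fun p => p.asIdeal) q q
        (fun i _ _ _ => i.isPrime)).not.mpr (by push_neg; exact hnot)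
      rw [Set.not_subset] at this
      obtain ⟨r, hrI, hrU⟩ := this
      refine ⟨r, (hS r).mpr ?_, (hImem r).mp hrI⟩
      intro p hp hrp
      exact hrU (Set.mem_biUnion hp hrp)
    · refine ⟨0, (hS 0).mpr ?_, by simp⟩
      intro p hp
      exact absurd ⟨p, hp⟩ hPe
end
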